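/- Let E₁ and E₂ be vector spaces over a field k₀, and let λ₁, λ₂ : E₁ × E₂ → k₀ be bilinear forms. Suppose that for all v₁ ∈ E₁ and v₂ ∈ E₂, λ₁(v₁, v₂) = 0 implies λ₂(v₁, v₂) = 0. Then there exists a scalar a ∈ k₀ such that λ₂ = a • λ₁. -/

import Mathlib

/-- Two linear functionals with nested kernels are proportional. -/
lemma aux_smul {k₀ : Type*} [Field k₀] {E : Type*} [AddCommGroup E] [Module k₀ E]
    (f g : E →ₗ[k₀] k₀) (h : ∀ x, f x = 0 → g x = 0) : ∃ a : k₀, g = a • f := by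
  by_cases hf : ∀ x, f x = 0
  · refine ⟨0, ?_⟩
    ext x
    simp [h x (hf x)]
  · push_neg at hf
    obtain ⟨u, hu⟩ := hf
    refine ⟨g u / f u, ?_⟩
    ext x
    have hx : f (x - (f x / f u) • u) = 0 := by
      simp [map_sub, map_smul, div_mul_cancel₀ _ hu]
    have := h _ hx
    simp only [map_sub, map_smul, sub_eq_zero, smul_eq_mul] at this
    simp only [LinearMap.smul_apply, smul_eq_mul]
    rw [this]
    field_simp

theorem stmt0 (k₀ : Type*) [Field k₀] (E₁ E₂ : Type*)
    [AddCommGroup E₁] [Module k₀ E₁] [AddCommGroup E₂] [Module k₀ E₂]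
    (lam₁ lam₂ : E₁ →ₗ[k₀] E₂ →ₗ[k₀] k₀)
    (h : ∀ (v₁ : E₁) (v₂ : E₂), lam₁ v₁ v₂ = 0 → lam₂ v₁ v₂ = 0) :
    ∃ a : k₀, lam₂ = a • lam₁ := by
  by_cases h1 : ∀ v₁, lam₁ v₁ = 0
  · refine ⟨0, ?_⟩
    ext v₁ v₂
    have : lam₁ v₁ v₂ = 0 := by rw [h1 v₁]; rfl
    simp [h v₁ v₂ this]
  · push_neg at h1
    obtain ⟨u₁, hu₁⟩ := h1
    obtain ⟨a, ha⟩ := aux_smul (lam₁ u₁) (lam₂ u₁) (h u₁)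
    refine ⟨a, ?_⟩
    ext v₁ v₂
    -- it suffices to show lam₂ v₁ = a • lam₁ v₁
    suffices hs : lam₂ v₁ = a • lam₁ v₁ by
      simp [hs]
    by_cases hv : lam₁ v₁ = 0
    · ext w
      have : lam₁ v₁ w = 0 := by rw [hv]; rfl
      rw [LinearMap.smul_apply, this, smul_zero]
      exact h v₁ w this
    · by_cases hdep : ∀ w, lam₁ u₁ w = 0 → lam₁ v₁ w = 0
      · -- dependent case: lam₁ v₁ = t • lam₁ u₁
        obtain ⟨t, ht⟩ := aux_smul (lam₁ u₁) (lam₁ v₁) hdep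
        have hker : lam₁ (v₁ - t • u₁) = 0 := by
          rw [map_sub, map_smul, ht, sub_self]
        have h2 : lam₂ (v₁ - t • u₁) = 0 := by
          ext w
          refine h _ w ?_
          rw [hker]; rfl
        rw [map_sub, map_smul, sub_eq_zero] at h2
        rw [h2, ha, ht]
        rw [smul_smul, smul_smul, mul_comm]
      · -- independent case
        push_neg at hdep
        obtain ⟨w₂, hw₂0, hw₂⟩ := hdep
        -- find w with lam₁ v₁ w = 0 and lam₁ u₁ w ≠ 0
        have : ∃ z, lam₁ u₁ z ≠ 0 := by
          by_contra hz
          push_neg at hz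
          exact hu₁ (by ext z; simp [hz z])
        obtain ⟨z, hz⟩ := this
        set w := z - (lam₁ v₁ z / lam₁ v₁ w₂) • w₂ with hw
        have hw1 : lam₁ v₁ w = 0 := by
          simp [hw, map_sub, map_smul, div_mul_cancel₀ _ hw₂]
        have hw2 : lam₁ u₁ w ≠ 0 := by
          simpa [hw, map_sub, map_smul, hw₂0] using hz
        obtain ⟨b, hb⟩ := aux_smul (lam₁ v₁) (lam₂ v₁) (h v₁)
        obtain ⟨c, hc⟩ := aux_smul (lam₁ (u₁ + v₁)) (lam₂ (u₁ + v₁)) (h (u₁ + v₁))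
        -- evaluate the identity a•lam₁u₁ + b•lam₁v₁ = c•(lam₁u₁ + lam₁v₁)
        have key : ∀ x, a * lam₁ u₁ x + b * lam₁ v₁ x = c * (lam₁ u₁ x + lam₁ v₁ x) := by
          intro x
          have h0 := LinearMap.congr_fun hc x
          have h1 := LinearMap.congr_fun ha x
          have h2 := LinearMap.congr_fun hb x
          simp only [map_add, LinearMap.add_apply, LinearMap.smul_apply,
            smul_eq_mul] at h0 h1 h2
          rw [← h1, ← h2]
          exact h0
        have keyw₂ := key w₂
        rw [hw₂0] at keyw₂
        simp only [mul_zero, zero_add] at keyw₂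
        have hbc : b = c := mul_right_cancel₀ hw₂ keyw₂
        have keyw := key w
        rw [hw1] at keyw
        simp only [mul_zero, add_zero] at keyw
        have hac : a = c := mul_right_cancel₀ hw2 keyw
        rw [hb, hbc, hac]
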